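/- The lattice D₁₂⁺ does not admit an orthonormal basis; that is, D₁₂⁺ is not isometric to the Euclidean lattice ℤ¹². -/

import Mathlib

open Matrix

/-- The set of vectors with all integer coordinates and even sum, or all
coordinates in `ℤ + 1/2`. -/
def Dset : Submodule ℤ (Fin 12 → ℚ) where
  carrier := {x | (∃ z : Fin 12 → ℤ, (∀ i, x i = z i) ∨ (∀ i, x i = z i + 1/2)) ∧
      ∃ m : ℤ, (∑ i, x i) = 2 * m}
  zero_mem' := ⟨⟨0, Or.inl fun i => by simp⟩, 0, by simp⟩
  add_mem' := by
    rintro x y ⟨⟨z, hz | hz⟩, m, hm⟩ ⟨⟨w, hw | hw⟩, n, hn⟩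
    · exact ⟨⟨z + w, Or.inl fun i => by simp [hz i, hw i]⟩, m + n,
        by simp only [Pi.add_apply, Finset.sum_add_distrib, hm, hn]; push_cast; ring⟩
    · exact ⟨⟨z + w, Or.inr fun i => by simp [hz i, hw i]; ring⟩, m + n,
        by simp only [Pi.add_apply, Finset.sum_add_distrib, hm, hn]; push_cast; ring⟩
    · exact ⟨⟨z + w, Or.inr fun i => by simp [hz i, hw i]; ring⟩, m + n,
        by simp only [Pi.add_apply, Finset.sum_add_distrib, hm, hn]; push_cast; ring⟩
    · exact ⟨⟨z + w + 1, Or.inl fun i => by simp [hz i, hw i]; ring⟩, m + n,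
        by simp only [Pi.add_apply, Finset.sum_add_distrib, hm, hn]; push_cast; ring⟩
  smul_mem' := by
    rintro c x ⟨⟨z, hz | hz⟩, m, hm⟩
    · refine ⟨⟨c • z, Or.inl fun i => by simp [hz i]⟩, c * m, ?_⟩
      simp only [Pi.smul_apply, zsmul_eq_mul, ← Finset.mul_sum, hm]
      push_cast; ring
    · rcases Int.even_or_odd c with ⟨k, hk⟩ | ⟨k, hk⟩
      · refine ⟨⟨fun i => 2 * k * z i + k, Or.inl fun i => by
          simp [hz i, hk]; push_cast; ring⟩, c * m, ?_⟩
        simp only [Pi.smul_apply, zsmul_eq_mul, ← Finset.mul_sum, hm]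
        push_cast; ring
      · refine ⟨⟨fun i => c * z i + k, Or.inr fun i => by
          simp [hz i, hk]; push_cast; ring⟩, c * m, ?_⟩
        simp only [Pi.smul_apply, zsmul_eq_mul, ← Finset.mul_sum, hm]
        push_cast; ring

/-- The lattice `D₁₂⁺ ⊂ ℚ¹²`: the span over `ℤ` of the `D₁₂` root lattice
(generated by the simple roots `eᵢ - eᵢ₊₁` for `i = 0,…,10` and `e₁₀ + e₁₁`)
together with the glue vector `(1/2, …, 1/2)`. -/
noncomputable def D12plus : Submodule ℤ (Fin 12 → ℚ) :=
  Submodule.span ℤ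
    ((Set.range fun i : Fin 11 =>
        (Pi.single (Fin.castSucc i) (1 : ℚ) - Pi.single i.succ (1 : ℚ))) ∪
      {Pi.single (10 : Fin 12) (1 : ℚ) + Pi.single (11 : Fin 12) (1 : ℚ),
        fun _ => (1 : ℚ) / 2})

/-- `D₁₂⁺` does not admit an orthonormal basis: there is no `ℤ`-linear isomorphism
from `D₁₂⁺` (with the restriction of the Euclidean inner product of `ℚ¹²`) to the
Euclidean lattice `ℤ¹²` preserving the bilinear forms. -/
lemma D12plus_le_Dset : D12plus ≤ Dset := by
  rw [D12plus, Submodule.span_le]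
  rintro x (⟨i, rfl⟩ | rfl | rfl)
  · refine ⟨⟨fun j => if j = Fin.castSucc i then 1 else if j = i.succ then -1 else 0,
      Or.inl fun j => ?_⟩, 0, ?_⟩
    · have : Fin.castSucc i ≠ i.succ := (Fin.castSucc_lt_succ : Fin.castSucc i < i.succ).ne
      by_cases h1 : j = Fin.castSucc i <;> by_cases h2 : j = i.succ <;>
        simp_all [Pi.single_apply]
    · have : Fin.castSucc i ≠ i.succ := (Fin.castSucc_lt_succ : Fin.castSucc i < i.succ).ne
      simp [Finset.sum_sub_distrib, Finset.sum_pi_single]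
  · refine ⟨⟨fun j => if j = (10 : Fin 12) then 1 else if j = (11 : Fin 12) then 1 else 0,
      Or.inl fun j => ?_⟩, 1, ?_⟩
    · by_cases h1 : j = (10 : Fin 12) <;> by_cases h2 : j = (11 : Fin 12) <;>
        simp_all [Pi.single_apply]
    · simp [Finset.sum_add_distrib, Finset.sum_pi_single]; norm_num
  · exact ⟨⟨0, Or.inr fun i => by norm_num⟩, 3, by simp; norm_num⟩

theorem D12plus_not_isometric_to_Z12 :
    ¬ ∃ e : D12plus ≃ₗ[ℤ] (Fin 12 → ℤ),
      ∀ x y : D12plus, (x : Fin 12 → ℚ) ⬝ᵥ (y : Fin 12 → ℚ) = ((e x ⬝ᵥ e y : ℤ) : ℚ) := by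
  rintro ⟨e, he⟩
  set v : D12plus := e.symm (Pi.single 0 1) with hv
  have h1 : (v : Fin 12 → ℚ) ⬝ᵥ (v : Fin 12 → ℚ) = 1 := by
    rw [he v v, hv, e.apply_symm_apply]
    simp [dotProduct, Pi.single_apply]
  set x : Fin 12 → ℚ := (v : Fin 12 → ℚ) with hx
  have hmem : x ∈ Dset := D12plus_le_Dset v.2
  obtain ⟨⟨z, hz | hz⟩, m, hm⟩ := hmem
  · -- integer coordinates, even sum: norm is even, can't be 1
    have h2 : (∑ i, z i * z i : ℤ) = 1 := by
      have : (∑ i, x i * x i : ℚ) = 1 := h1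
      rw [Finset.sum_congr rfl fun i _ => by rw [hz i]] at this
      exact_mod_cast this
    have h3 : (∑ i, z i : ℤ) = 2 * m := by
      have := hm
      rw [Finset.sum_congr rfl fun i _ => hz i] at this
      exact_mod_cast this
    have c2 : ((∑ i, z i * z i : ℤ) : ZMod 2) = ((∑ i, z i : ℤ) : ZMod 2) := by
      push_cast
      exact Finset.sum_congr rfl fun i _ => by
        generalize ((z i : ZMod 2)) = a; revert a; decide
    rw [h2, h3] at c2
    push_cast at c2
    rw [show (2 : ZMod 2) = 0 from rfl, zero_mul] at c2
    exact one_ne_zero c2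
  · -- half-integer coordinates: norm ≥ 3
    have key : ∀ i, (1/4 : ℚ) ≤ x i * x i := by
      intro i
      have hne : (2 * z i + 1 : ℤ) ≠ 0 := by omega
      have h4 : (1 : ℤ) ≤ (2 * z i + 1)^2 := by
        have := sq_nonneg (2 * z i + 1)
        have := pow_ne_zero 2 hne
        omega
      have h5 : (1 : ℚ) ≤ (2 * (z i : ℚ) + 1)^2 := by exact_mod_cast h4
      rw [hz i]; nlinarith
    have h6 : (3 : ℚ) ≤ ∑ i, x i * x i := by
      calc (3 : ℚ) = ∑ _i : Fin 12, (1/4 : ℚ) := by simp; norm_num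
        _ ≤ ∑ i, x i * x i := Finset.sum_le_sum fun i _ => key i
    have : (∑ i, x i * x i : ℚ) = 1 := h1
    linarith
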